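/- Let V be an n-dimensional complex vector space with basis, K ⊆ ∧²V, and suppose a ∈ V* is a nonzero element of the resonance variety R(V,K), i.e., there is b ∈ V* with a∧b ∈ K^⊥ \ {0}. Then for every q ≥ 0 the component W_q(V,K) of the Koszul module is nonzero; in particular W(V,K) is infinite-dimensional. -/

import Mathlib

noncomputable section

set_option synthInstance.maxHeartbeats 1000000
set_option maxHeartbeats 2000000

/-- `V`: an `n`-dimensional complex vector space. -/
abbrev Vv (n : ℕ) : Type := Fin n → ℂ

/-- Monomials of degree `q` in `n` variables: the standard basis of `Sym^q V`. -/
abbrev Mon (n q : ℕ) : Type := {d : Fin n →₀ ℕ // (d.sum fun _ e => e) = q}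

/-- A concrete model of `Sym^q V`, the degree-`q` graded piece of the symmetric algebra
`S = Sym V`:  coordinates with respect to the monomial basis. -/
abbrev SymV (n q : ℕ) : Type := Mon n q → ℂ

lemma mon_sub_deg {n q : ℕ} (i : Fin n) (d : Mon n (q + 1)) (h : d.1 i ≠ 0) :
    ((d.1 - Finsupp.single i 1).sum fun _ e => e) = q := by
  have hle : Finsupp.single i 1 ≤ d.1 := by
    rw [Finsupp.single_le_iff]
    omega
  have hadd : (d.1 - Finsupp.single i 1) + Finsupp.single i 1 = d.1 :=
    tsub_add_cancel_of_le hle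
  have hsum := Finsupp.sum_add_index' (f := d.1 - Finsupp.single i 1)
    (g := Finsupp.single i 1) (h := fun _ (e : ℕ) => e) (fun _ => rfl) (fun _ _ _ => rfl)
  rw [hadd, Finsupp.sum_single_index rfl] at hsum
  have := d.2
  omega

/-- Multiplication by the variable `X i`, as a linear map `Sym^q V → Sym^{q+1} V`. -/
def mulX (n q : ℕ) (i : Fin n) : SymV n q →ₗ[ℂ] SymV n (q + 1) where
  toFun f := fun d => if h : d.1 i ≠ 0 then f ⟨d.1 - Finsupp.single i 1, mon_sub_deg i d h⟩ else 0
  map_add' f g := by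
    funext d
    by_cases h : d.1 i = 0 <;> simp [h]
  map_smul' c f := by
    funext d
    by_cases h : d.1 i = 0 <;> simp [h]

/-- Multiplication `V × Sym^q V → Sym^{q+1} V`, `(v, f) ↦ v·f`, as a bilinear map. -/
def mulBil (n q : ℕ) : Vv n →ₗ[ℂ] SymV n q →ₗ[ℂ] SymV n (q + 1) where
  toFun v := ∑ i, v i • mulX n q i
  map_add' v w := by
    simp [add_smul, Finset.sum_add_distrib]
  map_smul' c v := by
    simp [Finset.smul_sum, smul_smul]

/-- The index set for the standard basis `e_i ∧ e_j`, `i < j`, of `⋀²V`. -/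
abbrev PairIdx (n : ℕ) : Type := {p : Fin n × Fin n // p.1 < p.2}

/-- A concrete model of the exterior square `⋀²V` of `V = ℂⁿ`:  coordinates with respect
to the standard basis `e_i ∧ e_j`, `i < j`. -/
abbrev Wedge2 (n : ℕ) : Type := PairIdx n → ℂ

/-- A concrete model of `V ⊗ Sym^q V`. -/
abbrev TV (n q : ℕ) : Type := Fin n → SymV n q

/-- A concrete model of `⋀²V ⊗ Sym^q V`. -/
abbrev TW (n q : ℕ) : Type := PairIdx n → SymV n q

/-- The Koszul differential `δ_{1,q} : V ⊗ Sym^q V → Sym^{q+1} V`, `v ⊗ f ↦ v·f`. -/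
def delta1 (n q : ℕ) : TV n q →ₗ[ℂ] SymV n (q + 1) :=
  LinearMap.lsum ℂ (fun _ : Fin n => SymV n q) ℂ (fun i => mulX n q i)

/-- The coefficient of `e_i ⊗ (-)` in `δ₂(e_{p₁} ∧ e_{p₂} ⊗ (-))`. -/
def coeff2 (n q : ℕ) (i : Fin n) (p : PairIdx n) : SymV n q →ₗ[ℂ] SymV n (q + 1) :=
  if p.1.1 = i then mulX n q p.1.2 else if p.1.2 = i then -(mulX n q p.1.1) else 0

/-- The Koszul differential `δ_{2,q} : ⋀²V ⊗ Sym^q V → V ⊗ Sym^{q+1} V`,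
`u ∧ w ⊗ f ↦ u ⊗ (w·f) - w ⊗ (u·f)`. -/
def delta2 (n q : ℕ) : TW n q →ₗ[ℂ] TV n (q + 1) :=
  LinearMap.pi (fun i =>
    LinearMap.lsum ℂ (fun _ : PairIdx n => SymV n q) ℂ (fun p => coeff2 n q i p))

/-- The subspace of `⋀²V ⊗ Sym^q V` corresponding to `K ⊗ Sym^q V`, for a subspace
`K ⊆ ⋀²V`. -/
def KTen (n q : ℕ) (K : Submodule ℂ (Wedge2 n)) : Submodule ℂ (TW n q) :=
  Submodule.span ℂ {g | ∃ k ∈ K, ∃ f : SymV n q, g = fun p => k p • f}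

/-- The image `δ_{2,q}(K ⊗ Sym^q V)`, viewed as a submodule of `Im δ_{2,q}`. -/
def WqSub (n q : ℕ) (K : Submodule ℂ (Wedge2 n)) :
    Submodule ℂ ↥(LinearMap.range (delta2 n q)) :=
  Submodule.comap (LinearMap.range (delta2 n q)).subtype
    (Submodule.map (delta2 n q) (KTen n q K))

/-- The degree-`q` graded piece `W_q(V,K) = Im(δ_{2,q}) / δ_{2,q}(K ⊗ Sym^q V)` of the
Koszul module `W(V,K)` associated to the pair `(V,K)`. -/
abbrev Wq (n q : ℕ) (K : Submodule ℂ (Wedge2 n)) : Type :=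
  ↥(LinearMap.range (delta2 n q)) ⧸ WqSub n q K

/-- The standard basis vector `e_i` of `V`. -/
def stdBasis (n : ℕ) (i : Fin n) : Vv n := Pi.single i 1

/-- For `a, b ∈ V^∨`, the linear functional on `⋀²V` corresponding to the decomposable
element `a ∧ b ∈ ⋀²(V^∨) ≅ (⋀²V)^∨`. -/
def phiForm (n : ℕ) (a b : Module.Dual ℂ (Vv n)) : Module.Dual ℂ (Wedge2 n) where
  toFun w := ∑ p : PairIdx n,
    w p * (a (stdBasis n p.1.1) * b (stdBasis n p.1.2) -
      a (stdBasis n p.1.2) * b (stdBasis n p.1.1))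
  map_add' w w' := by
    simp [add_mul, Finset.sum_add_distrib]
  map_smul' c w := by
    simp [Finset.mul_sum, mul_assoc]

/-- The resonance variety `R(V,K) ⊆ V^∨` of a pair `(V,K)`:  the set of those `a` for
which there exists `b` with `a ∧ b ∈ K^⊥ ∖ {0}`, together with `0`.  Here
`K^⊥ ⊆ (⋀²V)^∨` is the annihilator of `K`, i.e. the space of forms vanishing
identically on `K`. -/
def Res (n : ℕ) (K : Submodule ℂ (Wedge2 n)) : Set (Module.Dual ℂ (Vv n)) :=
  {a | ∃ b, phiForm n a b ∈ Submodule.dualAnnihilator K ∧ phiForm n a b ≠ 0} ∪ {0}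

/-- Multiplication by `v ∈ V`, as a map `⋀²V ⊗ Sym^q V → ⋀²V ⊗ Sym^{q+1} V`
(identity on the `⋀²V` factor). -/
def mulVW (n q : ℕ) (v : Vv n) : TW n q →ₗ[ℂ] TW n (q + 1) :=
  LinearMap.pi (fun p => (mulBil n q v).comp (LinearMap.proj p))

open DirectSum

/-! ### Auxiliary material -/

lemma mon_apply_le {n q : ℕ} (d : Mon n q) (i : Fin n) : d.1 i ≤ q := by
  classical
  by_cases h : i ∈ d.1.support
  · calc d.1 i ≤ ∑ j ∈ d.1.support, d.1 j :=
        Finset.single_le_sum (fun _ _ => Nat.zero_le _) h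
      _ = q := d.2
  · simp [Finsupp.notMem_support_iff.mp h]

instance monFinite (n q : ℕ) : Finite (Mon n q) := by
  apply Finite.of_injective
    (f := fun d : Mon n q => fun i : Fin n => (⟨d.1 i, Nat.lt_succ_of_le (mon_apply_le d i)⟩ :
      Fin (q + 1)))
  intro d e h
  apply Subtype.ext
  ext i
  exact congrArg Fin.val (congrFun h i)

noncomputable instance monFintype (n q : ℕ) : Fintype (Mon n q) := Fintype.ofFinite _

/-- Weight of a monomial at the point `a`. -/
def wA (n q : ℕ) (a : Module.Dual ℂ (Vv n)) (d : Mon n q) : ℂ :=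
  ∏ j, (a (stdBasis n j)) ^ (d.1 j)

/-- Evaluation of `Sym^q V` at the point `a ∈ V^∨`. -/
def evA (n q : ℕ) (a : Module.Dual ℂ (Vv n)) : SymV n q →ₗ[ℂ] ℂ where
  toFun f := ∑ d : Mon n q, f d * wA n q a d
  map_add' f g := by simp [add_mul, Finset.sum_add_distrib]
  map_smul' c f := by simp [Finset.mul_sum, mul_assoc]

lemma mon_add_deg {n q : ℕ} (i : Fin n) (c : Mon n q) :
    ((c.1 + Finsupp.single i 1).sum fun _ e => e) = q + 1 := by
  have hsum := Finsupp.sum_add_index' (f := c.1) (g := Finsupp.single i 1)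
    (h := fun _ (e : ℕ) => e) (fun _ => rfl) (fun _ _ _ => rfl)
  rw [hsum, Finsupp.sum_single_index rfl, c.2]

lemma wA_add_single {n q : ℕ} (a : Module.Dual ℂ (Vv n)) (i : Fin n) (c : Mon n q) :
    wA n (q + 1) a ⟨c.1 + Finsupp.single i 1, mon_add_deg i c⟩ =
      a (stdBasis n i) * wA n q a c := by
  classical
  unfold wA
  simp only [Finsupp.add_apply, pow_add, Finset.prod_mul_distrib]
  rw [mul_comm]
  congr 1
  simp [Finsupp.single_apply]

lemma evA_mulX {n q : ℕ} (a : Module.Dual ℂ (Vv n)) (i : Fin n) (f : SymV n q) :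
    evA n (q + 1) a (mulX n q i f) = a (stdBasis n i) * evA n q a f := by
  classical
  have hmain :
      (∑ d : Mon n (q + 1), mulX n q i f d * wA n (q + 1) a d) =
        ∑ c : Mon n q, f c * (a (stdBasis n i) * wA n q a c) := by
    rw [← Finset.sum_filter_of_ne (p := fun d : Mon n (q + 1) => d.1 i ≠ 0)
      (by intro d _ hd
          intro h
          simp [mulX, h] at hd)]
    refine Finset.sum_bij'
      (i := fun (d : Mon n (q + 1)) (hd : d ∈ Finset.univ.filter fun d : Mon n (q+1) => d.1 i ≠ 0) =>
        (⟨d.1 - Finsupp.single i 1, mon_sub_deg i d (by simpa using hd)⟩ : Mon n q))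
      (j := fun (c : Mon n q) _ =>
        (⟨c.1 + Finsupp.single i 1, mon_add_deg i c⟩ : Mon n (q + 1)))
      ?_ ?_ ?_ ?_ ?_
    · intro d hd
      simp
    · intro c _
      simp only [Finset.mem_filter, Finset.mem_univ, true_and]
      simp [Finsupp.add_apply, Finsupp.single_apply]
    · intro d hd
      have hd' : d.1 i ≠ 0 := by simpa using hd
      apply Subtype.ext
      have hle : Finsupp.single i 1 ≤ d.1 := by
        rw [Finsupp.single_le_iff]; omega
      exact tsub_add_cancel_of_le hle
    · intro c _
      apply Subtype.ext
      exact add_tsub_cancel_right _ _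
    · intro d hd
      have hd' : d.1 i ≠ 0 := by simpa using hd
      have hrec : (⟨(d.1 - Finsupp.single i 1) + Finsupp.single i 1,
          mon_add_deg i ⟨d.1 - Finsupp.single i 1, mon_sub_deg i d hd'⟩⟩ : Mon n (q+1)) = d := by
        apply Subtype.ext
        have hle : Finsupp.single i 1 ≤ d.1 := by
          rw [Finsupp.single_le_iff]; omega
        exact tsub_add_cancel_of_le hle
      calc mulX n q i f d * wA n (q + 1) a d
          = f ⟨d.1 - Finsupp.single i 1, mon_sub_deg i d hd'⟩ * wA n (q + 1) a d := by
            simp [mulX, hd']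
        _ = f ⟨d.1 - Finsupp.single i 1, mon_sub_deg i d hd'⟩ *
            (a (stdBasis n i) * wA n q a ⟨d.1 - Finsupp.single i 1, mon_sub_deg i d hd'⟩) := by
            rw [← wA_add_single a i ⟨d.1 - Finsupp.single i 1, mon_sub_deg i d hd'⟩, hrec]
  calc evA n (q + 1) a (mulX n q i f)
      = ∑ d : Mon n (q + 1), mulX n q i f d * wA n (q + 1) a d := rfl
    _ = ∑ c : Mon n q, f c * (a (stdBasis n i) * wA n q a c) := hmain
    _ = a (stdBasis n i) * evA n q a f := by
        simp only [evA, LinearMap.coe_mk, AddHom.coe_mk, Finset.mul_sum]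
        exact Finset.sum_congr rfl fun c _ => by ring

/-- The functional `v ⊗ g ↦ ∑ b(eᵢ) evₐ(gᵢ)` on `V ⊗ Sym^{q+1} V`. -/
def etaL (n q : ℕ) (a b : Module.Dual ℂ (Vv n)) : TV n (q + 1) →ₗ[ℂ] ℂ :=
  ∑ i : Fin n, b (stdBasis n i) • ((evA n (q + 1) a).comp (LinearMap.proj i))

lemma etaL_delta2 (n q : ℕ) (a b : Module.Dual ℂ (Vv n)) (x : TW n q) :
    etaL n q a b (delta2 n q x) =
      ∑ p : PairIdx n,
        (b (stdBasis n p.1.1) * a (stdBasis n p.1.2) -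
          b (stdBasis n p.1.2) * a (stdBasis n p.1.1)) * evA n q a (x p) := by
  classical
  have hdelta : ∀ i : Fin n, delta2 n q x i = ∑ p : PairIdx n, coeff2 n q i p (x p) := by
    intro i
    simp [delta2, LinearMap.lsum_apply, LinearMap.sum_apply]
  have hstep : etaL n q a b (delta2 n q x) =
      ∑ i : Fin n, ∑ p : PairIdx n,
        b (stdBasis n i) * evA n (q + 1) a (coeff2 n q i p (x p)) := by
    simp only [etaL, LinearMap.sum_apply, LinearMap.smul_apply, LinearMap.coe_comp,
      Function.comp_apply, LinearMap.proj_apply, smul_eq_mul]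
    refine Finset.sum_congr rfl fun i _ => ?_
    rw [hdelta i, map_sum, Finset.mul_sum]
  rw [hstep, Finset.sum_comm]
  refine Finset.sum_congr rfl fun p _ => ?_
  have hne : p.1.1 ≠ p.1.2 := ne_of_lt p.2
  have hterm : ∀ i : Fin n,
      b (stdBasis n i) * evA n (q + 1) a (coeff2 n q i p (x p)) =
        (if p.1.1 = i then b (stdBasis n i) * (a (stdBasis n p.1.2) * evA n q a (x p)) else 0) +
        (if p.1.2 = i then -(b (stdBasis n i) * (a (stdBasis n p.1.1) * evA n q a (x p)))
          else 0) := by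
    intro i
    by_cases h1 : p.1.1 = i
    · have h2 : p.1.2 ≠ i := fun h => hne (h1.trans h.symm)
      simp [coeff2, h1, h2, evA_mulX]
    · by_cases h2 : p.1.2 = i
      · simp [coeff2, h1, h2, evA_mulX]
        try ring
      · simp [coeff2, h1, h2]
  rw [Finset.sum_congr rfl fun i _ => hterm i, Finset.sum_add_distrib,
    Finset.sum_ite_eq Finset.univ p.1.1
      (fun i => b (stdBasis n i) * (a (stdBasis n p.1.2) * evA n q a (x p))),
    Finset.sum_ite_eq Finset.univ p.1.2
      (fun i => -(b (stdBasis n i) * (a (stdBasis n p.1.1) * evA n q a (x p))))]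
  simp only [Finset.mem_univ, if_true]
  ring

lemma etaL_delta2_KTen (n q : ℕ) (K : Submodule ℂ (Wedge2 n))
    (a b : Module.Dual ℂ (Vv n))
    (hmem : phiForm n a b ∈ Submodule.dualAnnihilator K)
    {x : TW n q} (hx : x ∈ KTen n q K) :
    etaL n q a b (delta2 n q x) = 0 := by
  classical
  have hlin : ∀ x ∈ {g : TW n q | ∃ k ∈ K, ∃ f : SymV n q, g = fun p => k p • f},
      ((etaL n q a b).comp (delta2 n q)) x = 0 := by
    rintro x ⟨k, hk, f, rfl⟩
    have hphi : phiForm n a b k = 0 := (Submodule.mem_dualAnnihilator _).mp hmem k hk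
    have := etaL_delta2 n q a b (fun p => k p • f)
    simp only [LinearMap.coe_comp, Function.comp_apply]
    rw [this]
    have : ∑ p : PairIdx n,
        (b (stdBasis n p.1.1) * a (stdBasis n p.1.2) -
          b (stdBasis n p.1.2) * a (stdBasis n p.1.1)) * evA n q a (k p • f) =
        (-(phiForm n a b k)) * evA n q a f := by
      simp only [phiForm, LinearMap.coe_mk, AddHom.coe_mk, map_smul, smul_eq_mul,
        neg_mul, Finset.sum_mul, ← Finset.sum_neg_distrib]
      exact Finset.sum_congr rfl fun p _ => by ring
    rw [this, hphi]
    ring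
  have : x ∈ Submodule.span ℂ {g : TW n q | ∃ k ∈ K, ∃ f : SymV n q, g = fun p => k p • f} := hx
  have h0 := Submodule.span_induction (p := fun y _ => ((etaL n q a b).comp (delta2 n q)) y = 0)
    hlin (by simp) (fun u v _ _ hu hv => by simp [map_add, hu, hv])
    (fun c u _ hu => by simp [map_smul, hu]) this
  simpa using h0

lemma exists_basis_ne_zero {n : ℕ} (a : Module.Dual ℂ (Vv n)) (ha : a ≠ 0) :
    ∃ i : Fin n, a (stdBasis n i) ≠ 0 := by
  by_contra h
  push_neg at h
  apply ha
  refine LinearMap.ext fun v => ?_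
  have hv : v = ∑ i : Fin n, v i • stdBasis n i := by
    ext j
    simp [stdBasis, Pi.single_apply, Finset.sum_ite_eq]
  rw [show a v = a (∑ i : Fin n, v i • stdBasis n i) from by rw [← hv], map_sum]
  simp [h]

lemma evA_exists_ne_zero {n q : ℕ} (a : Module.Dual ℂ (Vv n)) (ha : a ≠ 0) :
    ∃ f : SymV n q, evA n q a f ≠ 0 := by
  classical
  obtain ⟨i0, hi0⟩ := exists_basis_ne_zero a ha
  set m0 : Mon n q := ⟨Finsupp.single i0 q, by rw [Finsupp.sum_single_index rfl]⟩ with hm0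
  refine ⟨fun d => if d = m0 then 1 else 0, ?_⟩
  have : evA n q a (fun d => if d = m0 then 1 else 0) = wA n q a m0 := by
    simp only [evA, LinearMap.coe_mk, AddHom.coe_mk, ite_mul, one_mul, zero_mul]
    rw [Finset.sum_ite_eq' Finset.univ m0 (wA n q a)]
    simp
  rw [this]
  have : wA n q a m0 = a (stdBasis n i0) ^ q := by
    unfold wA
    rw [Finset.prod_eq_single i0 ?_ ?_]
    · simp [hm0]
    · intro j _ hj
      have : m0.1 j = 0 := Finsupp.single_eq_of_ne' (Ne.symm hj)
      simp [this]
    · simp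
  rw [this]
  exact pow_ne_zero q hi0

lemma Wq_nontrivial_aux (n q : ℕ) (K : Submodule ℂ (Wedge2 n))
    (a b : Module.Dual ℂ (Vv n)) (ha : a ≠ 0)
    (hmem : phiForm n a b ∈ Submodule.dualAnnihilator K)
    (hne : phiForm n a b ≠ 0) : Nontrivial (Wq n q K) := by
  classical
  obtain ⟨w0, hw0⟩ := DFunLike.ne_iff.mp hne
  obtain ⟨f0, hf0⟩ := evA_exists_ne_zero (q := q) a ha
  set x0 : TW n q := fun p => w0 p • f0 with hx0
  have hval : etaL n q a b (delta2 n q x0) =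
      (-(phiForm n a b w0)) * evA n q a f0 := by
    rw [etaL_delta2]
    simp only [phiForm, LinearMap.coe_mk, AddHom.coe_mk, hx0, map_smul, smul_eq_mul,
      neg_mul, Finset.sum_mul, ← Finset.sum_neg_distrib]
    exact Finset.sum_congr rfl fun p _ => by ring
  have hvne : etaL n q a b (delta2 n q x0) ≠ 0 := by
    rw [hval]
    exact mul_ne_zero (neg_ne_zero.mpr hw0) hf0
  set y : ↥(LinearMap.range (delta2 n q)) := ⟨delta2 n q x0, ⟨x0, rfl⟩⟩ with hy
  refine ⟨Submodule.Quotient.mk y, 0, ?_⟩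
  intro hcontra
  rw [Submodule.Quotient.mk_eq_zero, WqSub, Submodule.mem_comap] at hcontra
  obtain ⟨z, hz, hzeq⟩ := hcontra
  have : etaL n q a b (delta2 n q x0) = 0 := by
    have hzeq' : delta2 n q z = delta2 n q x0 := by
      simpa [hy] using hzeq
    rw [← hzeq']
    exact etaL_delta2_KTen n q K a b hmem hz
  exact hvne this

/-- If `a ∈ V^∨` is a nonzero element of the resonance variety
`R(V,K)`, i.e. there is `b ∈ V^∨` with `a ∧ b ∈ K^⊥ ∖ {0}`, then every graded component
`W_q(V,K)` of the Koszul module is nonzero; in particular `W(V,K) = ⊕_q W_q(V,K)` is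
infinite-dimensional. -/
theorem Wq_nontrivial_of_resonance (n : ℕ) (K : Submodule ℂ (Wedge2 n))
    (a b : Module.Dual ℂ (Vv n)) (ha : a ≠ 0)
    (hmem : phiForm n a b ∈ Submodule.dualAnnihilator K)
    (hne : phiForm n a b ≠ 0) :
    (∀ q : ℕ, Nontrivial (Wq n q K)) ∧
      ¬ Module.Finite ℂ (⨁ q : ℕ, Wq n q K) := by
  have hnt : ∀ q : ℕ, Nontrivial (Wq n q K) := fun q =>
    Wq_nontrivial_aux n q K a b ha hmem hne
  refine ⟨hnt, ?_⟩
  intro hfin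
  have hrank : Module.rank ℂ (⨁ q : ℕ, Wq n q K) =
      Cardinal.sum fun q : ℕ => Module.rank ℂ (Wq n q K) :=
    haveI : ∀ i : ℕ, Module.Free ℂ (Wq n i K) := fun i => Module.Free.of_divisionRing ℂ _
    rank_directSum (R := ℂ) (fun q : ℕ => Wq n q K)
  have hge : (Cardinal.aleph0 : Cardinal) ≤ Module.rank ℂ (⨁ q : ℕ, Wq n q K) := by
    rw [hrank]
    calc (Cardinal.aleph0 : Cardinal) = Cardinal.mk ℕ * 1 := by simp
      _ = Cardinal.sum (fun _ : ℕ => (1 : Cardinal)) := by rw [Cardinal.sum_const']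
      _ ≤ Cardinal.sum fun q : ℕ => Module.rank ℂ (Wq n q K) := by
          apply Cardinal.sum_le_sum
          intro q
          have := hnt q
          exact Cardinal.one_le_iff_pos.mpr (rank_pos (R := ℂ) (M := Wq n q K))
  have hlt : Module.rank ℂ (⨁ q : ℕ, Wq n q K) < Cardinal.aleph0 :=
    Module.rank_lt_aleph0 ℂ _
  exact absurd hge (not_le.mpr hlt)
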